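/- Let M be a real n×n matrix with an eigenvalue μ ∈ ℂ with |μ| = 1 and μ ≠ 1. Then there exists a nonzero vector v ∈ ℝⁿ and a strictly increasing sequence of positive integers p_1 < p_2 < … such that Mv ≠ v and M^{p_i} v → v as i → ∞. -/

import Mathlib

open Matrix Filter

/-- Powers of an eigenvector relation. -/
lemma aux_pow_eig {n : ℕ} (A : Matrix (Fin n) (Fin n) ℂ) (μ : ℂ) (w : Fin n → ℂ)
    (h : A *ᵥ w = μ • w) : ∀ k, A ^ k *ᵥ w = μ ^ k • w := by
  intro k
  induction k with
  | zero => simp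
  | succ k ih =>
      rw [pow_succ', ← Matrix.mulVec_mulVec, ih, Matrix.mulVec_smul, h, smul_smul, pow_succ]

/-- Telescoping estimate for powers on the unit circle. -/
lemma aux_tel {μ : ℂ} (habs : ‖μ‖ = 1) (q : ℕ) :
    ∀ s : ℕ, ‖μ ^ (q * s) - 1‖ ≤ s * ‖μ ^ q - 1‖ := by
  intro s
  induction s with
  | zero => simp
  | succ s ih =>
      have hsplit : μ ^ (q * (s + 1)) - 1 = μ ^ (q * s) * (μ ^ q - 1) + (μ ^ (q * s) - 1) := by
        rw [mul_add, mul_one, pow_add]; ring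
      have habs1 : ‖μ ^ (q * s)‖ = 1 := by rw [norm_pow, habs, one_pow]
      calc ‖μ ^ (q * (s + 1)) - 1‖
          ≤ ‖μ ^ (q * s) * (μ ^ q - 1)‖ + ‖μ ^ (q * s) - 1‖ := by
            rw [hsplit]; exact norm_add_le _ _
        _ ≤ ‖μ ^ q - 1‖ + s * ‖μ ^ q - 1‖ := by
            rw [norm_mul, habs1, one_mul]; exact add_le_add_right ih _
        _ = (s + 1 : ℕ) * ‖μ ^ q - 1‖ := by push_cast; ring
  
/-- Some positive power is close to 1. -/
lemma aux_close {μ : ℂ} (habs : ‖μ‖ = 1) :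
    ∀ ε > (0 : ℝ), ∃ q : ℕ, 0 < q ∧ ‖μ ^ q - 1‖ < ε := by
  intro ε hε
  have hball : ∀ k : ℕ, μ ^ k ∈ Metric.closedBall (0 : ℂ) 1 := by
    intro k
    simp [norm_pow, habs]
  obtain ⟨a, -, ψ, hψ, hconv⟩ := tendsto_subseq_of_bounded Metric.isBounded_closedBall hball
  have hc := hconv.cauchySeq
  rw [Metric.cauchySeq_iff] at hc
  obtain ⟨N, hN⟩ := hc ε hε
  have hlt : ψ N < ψ (N + 1) := hψ (Nat.lt_succ_self N)
  refine ⟨ψ (N + 1) - ψ N, by omega, ?_⟩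
  have h1 := hN (N + 1) (Nat.le_succ N) N le_rfl
  have hdiff : μ ^ ψ (N + 1) - μ ^ ψ N = μ ^ ψ N * (μ ^ (ψ (N + 1) - ψ N) - 1) := by
    rw [mul_sub, mul_one, ← pow_add]
    congr 2
    omega
  calc ‖μ ^ (ψ (N + 1) - ψ N) - 1‖
      = ‖μ ^ ψ N * (μ ^ (ψ (N + 1) - ψ N) - 1)‖ := by
        rw [norm_mul, norm_pow, habs, one_pow, one_mul]
    _ = dist (μ ^ ψ (N + 1)) (μ ^ ψ N) := by rw [Complex.dist_eq, hdiff]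
    _ < ε := h1

theorem stmt7 {n : ℕ} (M : Matrix (Fin n) (Fin n) ℝ) (μ : ℂ)
    (habs : ‖μ‖ = 1) (hne : μ ≠ 1)
    (heig : ∃ w : Fin n → ℂ, w ≠ 0 ∧ (M.map Complex.ofReal) *ᵥ w = μ • w) :
    ∃ (v : Fin n → ℝ) (p : ℕ → ℕ), v ≠ 0 ∧ StrictMono p ∧ (∀ i, 0 < p i) ∧
      M *ᵥ v ≠ v ∧ Tendsto (fun i => (M ^ p i) *ᵥ v) atTop (nhds v) := by
  obtain ⟨w, hw, hMw⟩ := heig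
  -- frequently close to 1
  have hfreq : ∀ m : ℕ, ∃ᶠ k in atTop, 0 < k ∧ ‖μ ^ k - 1‖ < 1 / (m + 1 : ℝ) := by
    intro m
    rw [Filter.frequently_atTop]
    intro N
    have hεpos : (0 : ℝ) < 1 / (m + 1 : ℝ) / (N + 1 : ℝ) := by positivity
    obtain ⟨q, hq, hqlt⟩ := aux_close habs _ hεpos
    refine ⟨q * (N + 1), by nlinarith, by positivity, ?_⟩
    calc ‖μ ^ (q * (N + 1)) - 1‖
        ≤ (N + 1 : ℕ) * ‖μ ^ q - 1‖ := aux_tel habs q (N + 1)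
      _ < (N + 1 : ℕ) * (1 / (m + 1 : ℝ) / (N + 1 : ℝ)) := by
          apply mul_lt_mul_of_pos_left hqlt
          positivity
      _ = 1 / (m + 1 : ℝ) := by
          push_cast
          field_simp
  obtain ⟨p, hpmono, hp⟩ := Filter.extraction_forall_of_frequently hfreq
  have hppos : ∀ i, 0 < p i := fun i => (hp i).1
  -- μ ^ p i → 1
  have hμp : Tendsto (fun i => μ ^ p i) atTop (nhds 1) := by
    rw [tendsto_iff_norm_sub_tendsto_zero]
    apply squeeze_zero (fun i => norm_nonneg _) (fun i => le_of_lt ?_)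
      tendsto_one_div_add_atTop_nhds_zero_nat
    exact (hp i).2
  -- pick component and projection
  have hμw : (μ - 1) • w ≠ 0 := smul_ne_zero (sub_ne_zero.mpr hne) hw
  obtain ⟨j0, hj0⟩ := Function.ne_iff.mp hμw
  have hj0' : (μ - 1) * w j0 ≠ 0 := by simpa using hj0
  obtain ⟨φ, hφ⟩ : ∃ φ : ℂ →L[ℝ] ℝ, φ ((μ - 1) * w j0) ≠ 0 := by
    by_cases hre : ((μ - 1) * w j0).re ≠ 0
    · exact ⟨Complex.reCLM, hre⟩
    · refine ⟨Complex.imCLM, ?_⟩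
      push_neg at hre
      intro him
      exact hj0' (Complex.ext hre him)
  set v : Fin n → ℝ := fun k => φ (w k) with hv_def
  have key : ∀ (B : Matrix (Fin n) (Fin n) ℝ) (j : Fin n),
      (B *ᵥ v) j = φ ((B.map Complex.ofReal *ᵥ w) j) := by
    intro B j
    simp only [Matrix.mulVec, dotProduct, Matrix.map_apply, map_sum, hv_def]
    refine Finset.sum_congr rfl fun k _ => ?_
    rw [show ((B j k : ℂ) * w k) = (B j k) • w k from Complex.real_smul.symm, _root_.map_smul,
      smul_eq_mul]
  have hMv : M *ᵥ v ≠ v := by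
    intro h
    apply hφ
    have h0 := congrFun h j0
    rw [key M j0, hMw] at h0
    have : φ (μ * w j0) = φ (w j0) := by simpa using h0
    have : φ (μ * w j0 - w j0) = 0 := by rw [map_sub, this, sub_self]
    simpa [sub_mul] using this
  have hv : v ≠ 0 := by
    intro h
    apply hMv
    rw [h, Matrix.mulVec_zero]
  refine ⟨v, p, hv, hpmono, hppos, hMv, ?_⟩
  rw [tendsto_pi_nhds]
  intro j
  have hmap_pow : ∀ k : ℕ, (M ^ k).map Complex.ofReal = (M.map Complex.ofReal) ^ k := by
    intro k
    induction k with
    | zero => simp [Matrix.map_one]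
    | succ k ih =>
        rw [pow_succ, pow_succ, ← ih]
        exact Matrix.map_mul (f := Complex.ofRealHom)
  have hterm : ∀ i, ((M ^ p i) *ᵥ v) j = φ (μ ^ p i * w j) := by
    intro i
    rw [key (M ^ p i) j, hmap_pow, aux_pow_eig _ _ _ hMw]
    simp
  simp only [hterm]
  have hlim : Tendsto (fun i => μ ^ p i * w j) atTop (nhds (w j)) := by
    simpa using hμp.mul (tendsto_const_nhds (x := w j))
  have := (φ.continuous.tendsto (w j)).comp hlim
  simpa [Function.comp_def, hv_def] using this
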